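/- Let D be a Gauss diagram of a virtual knot with exactly one overbridge. Then D can be transformed, by a finite sequence of welded moves (exchanging two consecutive arrowtails on the same strand) followed by Reidemeister I moves (deleting an isolated chord whose arrowhead and arrowtail are adjacent on the circle with no other chord endpoints between them), into the empty Gauss diagram. Hence every virtual bridge number one knot is welded equivalent to the unknot. -/

import Mathlib

/-- A symbol in a Gauss code: an over- or under-crossing passage, with a chord
label and a sign. Arrowtails of the Gauss diagram correspond to over-symbols,
arrowheads to under-symbols. -/
inductive GSym : Type
  | over (label : ℕ) (sign : Bool)
  | under (label : ℕ) (sign : Bool)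
deriving DecidableEq, Repr

namespace GSym
def isOver : GSym → Bool | GSym.over _ _ => true | _ => false
def isUnder : GSym → Bool | under _ _ => true | _ => false
def label : GSym → ℕ | GSym.over n _ => n | under n _ => n
end GSym

/-- A Gauss code: a finite list of circles, each a cyclic word of symbols. -/
abbrev GCode := List (List GSym)

namespace GCode

/-- Validity: every chord label that occurs does so exactly once as an over
symbol and once as an under symbol, with matching signs. -/
def Valid (g : GCode) : Prop :=
  ∀ (n : ℕ) (s : Bool),
    g.flatten.count (GSym.over n s) = g.flatten.count (GSym.under n s) ∧
    g.flatten.count (GSym.over n s) + g.flatten.count (GSym.over n (!s)) ≤ 1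

/-- The number of overbridges (strands between consecutive arrowheads that
contain at least one arrowtail) on one circle. -/
def circleBridges (w : List GSym) : ℕ :=
  if w.any GSym.isUnder then
    ((w.rotate (w.findIdx GSym.isUnder)).splitOnP GSym.isUnder).countP
      (fun b => b.any GSym.isOver)
  else if w.any GSym.isOver then 1 else 0

/-- The bridge number of a Gauss code: the total number of overbridges. -/
def vb (g : GCode) : ℕ := (g.map circleBridges).sum

/-- Fill a context with `m` holes by the given blocks of symbols. -/
def fill {m : ℕ} (C : List (List (GSym ⊕ Fin m))) (f : Fin m → List GSym) : GCode :=
  C.map fun w => w.flatMap fun x => match x with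
    | Sum.inl a => [a]
    | Sum.inr i => f i

/-- A context has exactly one occurrence of each hole. -/
def IsContext {m : ℕ} (C : List (List (GSym ⊕ Fin m))) : Prop :=
  ∀ i : Fin m, C.flatten.count (Sum.inr i) = 1

open GSym in
/-- Reidemeister moves on Gauss codes, together with the structural moves of
permuting the circles, rotating a cyclic word, and injectively relabelling the
chords. -/
inductive RMove : GCode → GCode → Prop
  | perm {g g' : GCode} : List.Perm g g' → RMove g g'
  | rotate (a b : List GSym) (rest : GCode) : RMove ((a ++ b) :: rest) ((b ++ a) :: rest)
  | relabel (g : GCode) (f : ℕ → ℕ) (hf : Function.Injective f) :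
      RMove g (g.map (List.map fun x => match x with
        | GSym.over n s => GSym.over (f n) s
        | under n s => under (f n) s))
  | r1 (C : List (List (GSym ⊕ Fin 1))) (hC : IsContext C) (n : ℕ) (s : Bool) :
      RMove (fill C ![[GSym.over n s, under n s]]) (fill C ![[]])
  | r1' (C : List (List (GSym ⊕ Fin 1))) (hC : IsContext C) (n : ℕ) (s : Bool) :
      RMove (fill C ![[under n s, GSym.over n s]]) (fill C ![[]])
  | r2 (C : List (List (GSym ⊕ Fin 2))) (hC : IsContext C) (n m' : ℕ) (s : Bool) :
      RMove (fill C ![[GSym.over n s, GSym.over m' (!s)], [under m' (!s), under n s]])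
            (fill C ![[], []])
  | r2' (C : List (List (GSym ⊕ Fin 2))) (hC : IsContext C) (n m' : ℕ) (s : Bool) :
      RMove (fill C ![[GSym.over n s, GSym.over m' (!s)], [under n s, under m' (!s)]])
            (fill C ![[], []])
  | r3 (C : List (List (GSym ⊕ Fin 3))) (hC : IsContext C) (a b c : ℕ) :
      RMove (fill C ![[GSym.over a true, GSym.over b true],
                      [under a true, GSym.over c true],
                      [under b true, under c true]])
            (fill C ![[GSym.over b true, GSym.over a true],
                      [GSym.over c true, under a true],
                      [under c true, under b true]])

/-- Equivalence of Gauss codes under the Reidemeister moves. -/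
def REquiv : GCode → GCode → Prop := Relation.EqvGen RMove

/-- The cyclic word of circle `c`. -/
def circ (g : GCode) (c : ℕ) : List GSym := g.getD c []

/-- The symbol at position `i` of circle `c`. -/
def symAt (g : GCode) (c i : ℕ) : Option GSym := (g.circ c)[i]?

/-- The representative position of the strand containing position `i` of circle
`c`: the position of the first under-symbol at or (cyclically) after `i`.  On a
circle with no under-symbols every position represents the unique strand `0`. -/
def strandRep (g : GCode) (c i : ℕ) : ℕ :=
  let w := g.circ c
  if w.any GSym.isUnder then (i + (w.rotate i).findIdx GSym.isUnder) % w.length else 0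

/-- A coloring move on a Gauss code: a partial coloring assigns an optional
color to each strand representative `(circle, position)`; the color of a strand
may be extended across an arrowhead whose chord's arrowtail lies on an already
colored strand. -/
def CMove (g : GCode) {k : ℕ} (f f' : ℕ → ℕ → Option (Fin k)) : Prop :=
  ∃ (n : ℕ) (s : Bool) (co io cu iu ap aq : ℕ),
    g.symAt co io = some (GSym.over n s) ∧
    g.symAt cu iu = some (GSym.under n s) ∧
    ((ap = iu ∧ aq = g.strandRep cu (iu + 1)) ∨ (aq = iu ∧ ap = g.strandRep cu (iu + 1))) ∧
    ap ≠ aq ∧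
    (f co (g.strandRep co io)).isSome ∧ (f cu ap).isSome ∧ f cu aq = none ∧
    f' = fun c i => if c = cu ∧ i = aq then f cu ap else f c i

/-- `g` is `k`-meridionally colorable: `k` seed strands receive the `k`
distinct colors and a finite sequence of coloring moves colors every strand. -/
def Colorable (g : GCode) (k : ℕ) : Prop :=
  ∃ (m : ℕ) (F : ℕ → ℕ → ℕ → Option (Fin k)) (seeds : Fin k → ℕ × ℕ),
    (∀ t : Fin k, (seeds t).1 < g.length ∧ (seeds t).2 < (g.circ (seeds t).1).length ∧
      g.strandRep (seeds t).1 (seeds t).2 = (seeds t).2 ∧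
      F 0 (seeds t).1 (seeds t).2 = some t) ∧
    (∀ c i : ℕ, (F 0 c i).isSome → ∃ t : Fin k, seeds t = (c, i)) ∧
    (∀ j < m, CMove g (F j) (F (j + 1))) ∧
    (∀ c < g.length, ∀ i < (g.circ c).length, (F m c (g.strandRep c i)).isSome)

/-- The Wirtinger number of a Gauss code. -/
noncomputable def wirt (g : GCode) : ℕ := sInf {k | Colorable g k}

end GCode

open GCode in
/-- Welded moves on a (cyclic) Gauss word: exchanging two consecutive
arrowtails, together with rotation of the cyclic word. -/
inductive WeldMove : List GSym → List GSym → Prop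
  | swap (a b : List GSym) (n m : ℕ) (s s' : Bool) :
      WeldMove (a ++ [GSym.over n s, GSym.over m s'] ++ b)
               (a ++ [GSym.over m s', GSym.over n s] ++ b)
  | rot (a b : List GSym) : WeldMove (a ++ b) (b ++ a)

open GCode in
/-- Reidemeister I deletions on a (cyclic) Gauss word: deleting an isolated
chord whose arrowtail and arrowhead are adjacent with nothing between them,
together with rotation of the cyclic word. -/
inductive R1Del : List GSym → List GSym → Prop
  | del (a b : List GSym) (n : ℕ) (s : Bool) :
      R1Del (a ++ [GSym.over n s, GSym.under n s] ++ b) (a ++ b)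
  | del' (a b : List GSym) (n : ℕ) (s : Bool) :
      R1Del (a ++ [GSym.under n s, GSym.over n s] ++ b) (a ++ b)
  | rot (a b : List GSym) : R1Del (a ++ b) (b ++ a)

namespace OneBridgeAux

open GCode

/-- Turn any symbol into the corresponding over symbol. -/
def toOver : GSym → GSym
  | .over n s => .over n s
  | .under n s => .over n s

def AllU (l : List GSym) : Prop := ∀ x ∈ l, x.isUnder = true
def AllO (l : List GSym) : Prop := ∀ x ∈ l, x.isOver = true

lemma over_or_under (x : GSym) : x.isUnder = true ∨ x.isOver = true := by
  cases x <;> simp [GSym.isUnder, GSym.isOver]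

lemma eq_under_of_isUnder {x : GSym} (h : x.isUnder = true) :
    ∃ n s, x = GSym.under n s := by
  rcases x with ⟨n, s⟩ | ⟨n, s⟩
  · simp [GSym.isUnder] at h
  · exact ⟨n, s, rfl⟩

lemma eq_over_of_isOver {x : GSym} (h : x.isOver = true) :
    ∃ n s, x = GSym.over n s := by
  rcases x with ⟨n, s⟩ | ⟨n, s⟩
  · exact ⟨n, s, rfl⟩
  · simp [GSym.isOver] at h

/-- The chain of Reidemeister I deletions killing a word of the form
`(U.map toOver).reverse ++ U` with `U` all under-symbols. -/
lemma r1del_chain : ∀ U : List GSym, AllU U →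
    Relation.ReflTransGen R1Del ((U.map toOver).reverse ++ U) [] := by
  intro U
  induction U with
  | nil => intro _; exact Relation.ReflTransGen.refl
  | cons x U ih =>
    intro h
    obtain ⟨n, s, rfl⟩ := eq_under_of_isUnder (h x List.mem_cons_self)
    have step : R1Del (((GSym.under n s :: U).map toOver).reverse ++ (GSym.under n s :: U))
        ((U.map toOver).reverse ++ U) := by
      have e : ((GSym.under n s :: U).map toOver).reverse ++ (GSym.under n s :: U)
          = (U.map toOver).reverse ++ [GSym.over n s, GSym.under n s] ++ U := by
        simp [toOver]
      rw [e]
      exact R1Del.del _ _ n s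
    exact Relation.ReflTransGen.head step (ih fun y hy => h y (List.mem_cons_of_mem _ hy))

/-- A single adjacent swap of two over symbols. -/
def SwapStep (l l' : List GSym) : Prop :=
  ∃ a b n m s s', l = a ++ [GSym.over n s, GSym.over m s'] ++ b ∧
    l' = a ++ [GSym.over m s', GSym.over n s] ++ b

lemma swapStep_cons {l l'} (x : GSym) (h : SwapStep l l') : SwapStep (x :: l) (x :: l') := by
  obtain ⟨a, b, n, m, s, s', rfl, rfl⟩ := h
  exact ⟨x :: a, b, n, m, s, s', rfl, rfl⟩

/-- Adjacent swaps realize an arbitrary permutation of a word of over symbols. -/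
lemma perm_swaps : ∀ {l l' : List GSym}, l.Perm l' → AllO l →
    Relation.ReflTransGen SwapStep l l' := by
  intro l l' h
  induction h with
  | nil => intro _; exact .refl
  | cons x h ih =>
    intro ho
    exact Relation.ReflTransGen.lift (x :: ·) (fun a b hab => swapStep_cons x hab) _ _
      (ih fun y hy => ho y (List.mem_cons_of_mem _ hy))
  | swap x y l =>
    intro ho
    obtain ⟨n, s, rfl⟩ := eq_over_of_isOver (ho x (by simp))
    obtain ⟨m, s', rfl⟩ := eq_over_of_isOver (ho y (by simp))
    exact Relation.ReflTransGen.single ⟨[], l, m, n, s', s, rfl, rfl⟩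
  | trans h1 _ ih1 ih2 =>
    intro ho
    exact (ih1 ho).trans (ih2 fun y hy => ho y (h1.mem_iff.mpr hy))

lemma swap_weld {a b : List GSym} (U : List GSym) (h : SwapStep a b) :
    WeldMove (a ++ U) (b ++ U) := by
  obtain ⟨c, d, n, m, s, s', rfl, rfl⟩ := h
  simpa [List.append_assoc] using WeldMove.swap c (d ++ U) n m s s'

lemma swaps_weld {l l' : List GSym} (U : List GSym)
    (h : Relation.ReflTransGen SwapStep l l') :
    Relation.ReflTransGen WeldMove (l ++ U) (l' ++ U) :=
  Relation.ReflTransGen.lift (· ++ U) (fun a b hab => swap_weld U hab) _ _ h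

/-- Structure of a word whose over-runs number zero or one. -/
lemma split_combo : ∀ t : List GSym,
    ((t.splitOnP GSym.isUnder).countP (fun b => b.any GSym.isOver) = 0 → AllU t) ∧
    ((t.splitOnP GSym.isUnder).countP (fun b => b.any GSym.isOver) = 1 →
      ∃ a o b, t = a ++ o ++ b ∧ AllU a ∧ AllO o ∧ AllU b) := by
  intro t
  induction t with
  | nil =>
    refine ⟨fun _ x hx => by simp at hx, fun h => ?_⟩
    rw [List.splitOnP_nil] at h
    simp [List.countP_cons] at h
  | cons x t ih =>
    rcases over_or_under x with hu | ho
    · rw [List.splitOnP_cons, if_pos hu]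
      have hcnt : ∀ k, (([] :: t.splitOnP GSym.isUnder).countP (fun b => b.any GSym.isOver) = k)
          ↔ ((t.splitOnP GSym.isUnder).countP (fun b => b.any GSym.isOver) = k) := by
        intro k; simp [List.countP_cons]
      constructor
      · intro h
        have ht := ih.1 ((hcnt 0).mp h)
        intro y hy
        rcases List.mem_cons.mp hy with rfl | hy
        · exact hu
        · exact ht y hy
      · intro h
        obtain ⟨a, o, b, rfl, ha, hoo, hb⟩ := ih.2 ((hcnt 1).mp h)
        refine ⟨x :: a, o, b, rfl, ?_, hoo, hb⟩
        intro y hy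
        rcases List.mem_cons.mp hy with rfl | hy
        · exact hu
        · exact ha y hy
    · have hnu : x.isUnder = false := by
        obtain ⟨n, s, rfl⟩ := eq_over_of_isOver ho
        rfl
      rw [List.splitOnP_cons, hnu]
      rcases e : t.splitOnP GSym.isUnder with _ | ⟨hB, bs⟩
      · exact absurd e (List.splitOnP_ne_nil _ t)
      · simp only [Bool.false_eq_true, if_false, List.modifyHead]
        have hxany : (x :: hB).any GSym.isOver = true := by simp [ho]
        constructor
        · intro h
          rw [List.countP_cons, if_pos hxany] at h
          omega
        · intro h
          rw [List.countP_cons, if_pos hxany] at h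
          have hbs0 : bs.countP (fun b => b.any GSym.isOver) = 0 := by omega
          by_cases hB0 : hB.any GSym.isOver = true
          · have h1 : (t.splitOnP GSym.isUnder).countP (fun b => b.any GSym.isOver) = 1 := by
              rw [e, List.countP_cons, if_pos hB0, hbs0]
            obtain ⟨a, o, b, rfl, ha, hoo, hb⟩ := ih.2 h1
            rcases a with _ | ⟨y, a'⟩
            · refine ⟨[], x :: o, b, by simp, fun y hy => by simp at hy, ?_, hb⟩
              intro z hz
              rcases List.mem_cons.mp hz with rfl | hz
              · exact ho
              · exact hoo z hz
            · exfalso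
              have hy : y.isUnder = true := ha y (by simp)
              have : ((y :: a') ++ o ++ b).splitOnP GSym.isUnder
                  = [] :: ((a' ++ o ++ b).splitOnP GSym.isUnder) := by
                rw [List.cons_append, List.cons_append, List.splitOnP_cons, if_pos hy]
              rw [e] at this
              have hBnil : hB = [] := (List.cons.injEq _ _ _ _ ▸ this).1
              rw [hBnil] at hB0
              simp at hB0
          · have h0 : (t.splitOnP GSym.isUnder).countP (fun b => b.any GSym.isOver) = 0 := by
              rw [e, List.countP_cons, if_neg hB0, hbs0]
            have ht := ih.1 h0
            exact ⟨[], [x], t, by simp, fun y hy => by simp at hy,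
              fun y hy => by rcases List.mem_singleton.mp hy with rfl; exact ho, ht⟩

lemma count_over_eq_zero {U : List GSym} (hU : AllU U) (n : ℕ) (s : Bool) :
    U.count (GSym.over n s) = 0 := by
  rw [List.count_eq_zero]
  intro hmem
  have := hU _ hmem
  simp [GSym.isUnder] at this

lemma count_under_eq_zero {O : List GSym} (hO : AllO O) (n : ℕ) (s : Bool) :
    O.count (GSym.under n s) = 0 := by
  rw [List.count_eq_zero]
  intro hmem
  have := hO _ hmem
  simp [GSym.isOver] at this

lemma count_map_toOver : ∀ (U : List GSym), AllU U → ∀ n s,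
    (U.map toOver).count (GSym.over n s) = U.count (GSym.under n s) := by
  intro U
  induction U with
  | nil => intro _ n s; rfl
  | cons x U ih =>
    intro h n s
    obtain ⟨m, t, rfl⟩ := eq_under_of_isUnder (h x List.mem_cons_self)
    have ihU := ih (fun y hy => h y (List.mem_cons_of_mem _ hy)) n s
    simp only [List.map_cons, List.count_cons, ihU, toOver, beq_iff_eq]
    have heq : (GSym.over m t = GSym.over n s) ↔ (GSym.under m t = GSym.under n s) := by
      constructor <;> (intro hx; injection hx with h1 h2; rw [h1, h2])
    by_cases hc : GSym.over m t = GSym.over n s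
    · rw [if_pos hc, if_pos (heq.mp hc)]
    · rw [if_neg hc, if_neg (fun hx => hc (heq.mpr hx))]

lemma allO_map_toOver (U : List GSym) : AllO (U.map toOver) := by
  intro y hy
  obtain ⟨x, _, rfl⟩ := List.mem_map.mp hy
  cases x <;> rfl

end OneBridgeAux

open OneBridgeAux in
open GCode in
/-- A Gauss diagram of a virtual knot with exactly one overbridge can be
transformed by a finite sequence of welded moves followed by Reidemeister I
deletions into the empty Gauss diagram; hence every virtual bridge number one
knot is welded equivalent to the unknot. -/
theorem one_bridge_welded_trivial (w : List GSym) (hv : Valid [w])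
    (hone : circleBridges w = 1) :
    ∃ w' : List GSym,
      Relation.ReflTransGen WeldMove w w' ∧
      Relation.ReflTransGen R1Del w' [] := by
  classical
  -- counts in `w` from validity
  have hcount : ∀ n s, w.count (GSym.over n s) = w.count (GSym.under n s) := by
    intro n s
    have := (hv n s).1
    simpa using this
  -- `w` contains an under symbol
  have hu : w.any GSym.isUnder = true := by
    by_contra h
    rw [circleBridges, if_neg h] at hone
    split at hone
    · next ho =>
      obtain ⟨x, hx, hxo⟩ := List.any_eq_true.mp ho
      obtain ⟨n, s, rfl⟩ := eq_over_of_isOver hxo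
      have h1 : 0 < w.count (GSym.over n s) := List.count_pos_iff.mpr hx
      rw [hcount n s] at h1
      obtain hmem := List.count_pos_iff.mp h1
      exact h (List.any_eq_true.mpr ⟨_, hmem, rfl⟩)
    · omega
  set j := w.findIdx GSym.isUnder with hjdef
  have hj : j < w.length := List.findIdx_lt_length_of_exists (List.any_eq_true.mp hu)
  have hwj : (w[j]'hj).isUnder = true := List.findIdx_getElem (w := hj)
  obtain ⟨n0, s0, hn0⟩ := eq_under_of_isUnder hwj
  -- the rotated word
  have hrot : w.rotate j = GSym.under n0 s0 :: (w.drop (j + 1) ++ w.take j) := by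
    rw [List.rotate_eq_drop_append_take hj.le, List.drop_eq_getElem_cons hj, hn0]
    rfl
  rw [circleBridges, if_pos hu, ← hjdef, hrot, List.splitOnP_cons] at hone
  have : (GSym.under n0 s0).isUnder = true := rfl
  rw [if_pos this, List.countP_cons] at hone
  simp only [List.any_nil, Bool.false_eq_true, if_false, Nat.add_zero] at hone
  -- structure of the rest of the rotated word
  obtain ⟨a, o, b, het, ha, hoo, hb⟩ := (split_combo (w.drop (j + 1) ++ w.take j)).2 hone
  set U : List GSym := b ++ (GSym.under n0 s0 :: a) with hUdef
  have hUall : AllU U := by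
    intro y hy
    rcases List.mem_append.mp hy with hy | hy
    · exact hb y hy
    · rcases List.mem_cons.mp hy with rfl | hy
      · rfl
      · exact ha y hy
  -- the word `o ++ U` is a permutation of `w`
  have hperm : (o ++ U).Perm w := by
    have h1 : (w.rotate j).Perm w := List.rotate_perm w j
    have h2 : (o ++ U).Perm (w.rotate j) := by
      rw [hrot, het, hUdef]
      have e1 : o ++ (b ++ GSym.under n0 s0 :: a) = (o ++ b) ++ (GSym.under n0 s0 :: a) := by
        simp [List.append_assoc]
      have e2 : GSym.under n0 s0 :: (a ++ o ++ b) = (GSym.under n0 s0 :: a) ++ (o ++ b) := by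
        simp [List.append_assoc]
      rw [e1, e2]
      exact List.perm_append_comm
    exact h2.trans h1
  -- hence `o` is a permutation of `(U.map toOver).reverse`
  have hpermo : o.Perm ((U.map toOver).reverse) := by
    refine ((List.perm_iff_count).mpr ?_).trans (List.reverse_perm _).symm
    intro x
    rcases x with ⟨n, s⟩ | ⟨n, s⟩
    · have hcnt := hperm.count_eq (GSym.over n s)
      have hcnt' := hperm.count_eq (GSym.under n s)
      rw [List.count_append] at hcnt hcnt'
      rw [count_over_eq_zero hUall, Nat.add_zero] at hcnt
      rw [count_under_eq_zero hoo, Nat.zero_add] at hcnt'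
      rw [count_map_toOver U hUall n s, hcnt, hcount n s, ← hcnt']
    · rw [count_under_eq_zero hoo, count_under_eq_zero (allO_map_toOver U)]
  -- the welded moves
  refine ⟨(U.map toOver).reverse ++ U, ?_, ?_⟩
  · have step1 : WeldMove w (w.rotate j) := by
      have := WeldMove.rot (w.take j) (w.drop j)
      rwa [List.take_append_drop, ← List.rotate_eq_drop_append_take hj.le] at this
    have step2 : WeldMove (w.rotate j) (o ++ U) := by
      have := WeldMove.rot (GSym.under n0 s0 :: a) (o ++ b)
      have e1 : (GSym.under n0 s0 :: a) ++ (o ++ b) = w.rotate j := by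
        rw [hrot, het]; simp [List.append_assoc]
      have e2 : (o ++ b) ++ (GSym.under n0 s0 :: a) = o ++ U := by
        rw [hUdef]; simp [List.append_assoc]
      rwa [e1, e2] at this
    have step3 : Relation.ReflTransGen WeldMove (o ++ U) ((U.map toOver).reverse ++ U) :=
      swaps_weld U (perm_swaps hpermo hoo)
    exact (Relation.ReflTransGen.head step1 (Relation.ReflTransGen.single step2)).trans step3
  · exact r1del_chain U hUall
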